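/- Let G be a finite simple connected graph with at least one vertex that is P₄-free, K_{1,3}-free, and B-free, where B = K₁ * (K₁ ⊔ K₂). Then G is a complete multipartite graph K_{t₁,...,t_r} in which every part has size at most 2. -/

import Mathlib

open SimpleGraph

/-- The join of two graphs on disjoint vertex sets: disjoint union plus all cross edges. -/
def gJoin {α β : Type*} (G : SimpleGraph α) (H : SimpleGraph β) : SimpleGraph (α ⊕ β) where
  Adj x y := match x, y with
    | Sum.inl a, Sum.inl b => G.Adj a b
    | Sum.inr a, Sum.inr b => H.Adj a b
    | Sum.inl _, Sum.inr _ => True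
    | Sum.inr _, Sum.inl _ => True
  symm := by constructor; rintro (a|a) (b|b) h <;> first | exact h.symm | trivial
  loopless := by constructor; rintro (a|a) h; exacts [G.irrefl h, H.irrefl h]

/-- A graph is `P₄`-free if it has no induced subgraph isomorphic to the path on 4 vertices. -/
def P4Free {V : Type*} (G : SimpleGraph V) : Prop :=
  IsEmpty (SimpleGraph.pathGraph 4 ↪g G)

/-- `T` is a connected dominating set of `G`. -/
def IsConnDomSet {V : Type*} (G : SimpleGraph V) (T : Set V) : Prop :=
  T.Nonempty ∧ (G.induce T).Connected ∧ ∀ u ∉ T, ∃ t ∈ T, G.Adj u t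

/-- `T` is a minimum connected dominating set of `G`. -/
def IsMinConnDomSet {V : Type*} (G : SimpleGraph V) (T : Set V) : Prop :=
  IsConnDomSet G T ∧ ∀ T' : Set V, IsConnDomSet G T' → T.ncard ≤ T'.ncard

/-- The graph `K₁ ⊔ K₂`: three vertices, exactly one edge (between 0 and 1). -/
def graphK1K2 : SimpleGraph (Fin 3) := SimpleGraph.fromRel (fun a b => a = 0 ∧ b = 1)

/-- The star `K_{1,3}`: vertex 0 adjacent to 1, 2, 3. -/
def graphK13 : SimpleGraph (Fin 4) := SimpleGraph.fromRel (fun a _ => a = 0)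

/-- The graph `B = K₁ * (K₁ ⊔ K₂)`: vertex 0 adjacent to all, plus the edge 2-3. -/
def graphB : SimpleGraph (Fin 4) := SimpleGraph.fromRel (fun a b => a = 0 ∨ (a = 2 ∧ b = 3))

lemma embP4' {V : Type} (G : SimpleGraph V) (a b c d : V)
    (hab : G.Adj a b) (hbc : G.Adj b c) (hcd : G.Adj c d)
    (hac : ¬ G.Adj a c) (had : ¬ G.Adj a d) (hbd : ¬ G.Adj b d) :
    Nonempty (SimpleGraph.pathGraph 4 ↪g G) := by
  have nab := hab.ne; have nbc := hbc.ne; have ncd := hcd.ne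
  have nac : a ≠ c := fun h => had (by rw [h]; exact hcd)
  have nbd : b ≠ d := fun h => had (by rw [← h]; exact hab)
  have nad : a ≠ d := fun h => hac (by rw [h]; exact hcd.symm)
  have hca : ¬ G.Adj c a := fun h => hac h.symm
  have hda : ¬ G.Adj d a := fun h => had h.symm
  have hdb : ¬ G.Adj d b := fun h => hbd h.symm
  have hba := hab.symm; have hcb := hbc.symm; have hdc := hcd.symm
  have nba := nab.symm; have nca := nac.symm; have nda := nad.symm
  have ncb := nbc.symm; have ndb := nbd.symm; have ndc := ncd.symm
  refine ⟨⟨⟨![a,b,c,d], ?_⟩, ?_⟩⟩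
  · intro i j hij
    fin_cases i <;> fin_cases j <;> simp_all
  · intro i j
    change G.Adj (![a,b,c,d] i) (![a,b,c,d] j) ↔ _
    fin_cases i <;> fin_cases j <;>
      simp_all [pathGraph_adj, Fin.ext_iff]
lemma embB' {V : Type} (G : SimpleGraph V) (w y x z : V)
    (hwy : G.Adj w y) (hwx : G.Adj w x) (hwz : G.Adj w z) (hxz : G.Adj x z)
    (hyx : ¬ G.Adj y x) (hyz : ¬ G.Adj y z) (nyx : y ≠ x) (nyz : y ≠ z) :
    Nonempty (graphB ↪g G) := by
  have hxy : ¬ G.Adj x y := fun h => hyx h.symm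
  have hzy : ¬ G.Adj z y := fun h => hyz h.symm
  have hyw := hwy.symm; have hxw := hwx.symm; have hzw := hwz.symm; have hzx := hxz.symm
  have nwy := hwy.ne; have nwx := hwx.ne; have nwz := hwz.ne; have nxz := hxz.ne
  have nyw := nwy.symm; have nxw := nwx.symm; have nzw := nwz.symm; have nzx := nxz.symm
  have nxy := nyx.symm; have nzy := nyz.symm
  refine ⟨⟨⟨![w,y,x,z], ?_⟩, ?_⟩⟩
  · intro i j hij
    fin_cases i <;> fin_cases j <;> simp_all
  · intro i j
    change G.Adj (![w,y,x,z] i) (![w,y,x,z] j) ↔ _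
    fin_cases i <;> fin_cases j <;>
      simp_all [graphB]

lemma embK13' {V : Type} (G : SimpleGraph V) (w x y z : V)
    (hwx : G.Adj w x) (hwy : G.Adj w y) (hwz : G.Adj w z)
    (hxy : ¬ G.Adj x y) (hxz : ¬ G.Adj x z) (hyz : ¬ G.Adj y z)
    (nxy : x ≠ y) (nxz : x ≠ z) (nyz : y ≠ z) :
    Nonempty (graphK13 ↪g G) := by
  have hyx : ¬ G.Adj y x := fun h => hxy h.symm
  have hzx : ¬ G.Adj z x := fun h => hxz h.symm
  have hzy : ¬ G.Adj z y := fun h => hyz h.symm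
  have hxw := hwx.symm; have hyw := hwy.symm; have hzw := hwz.symm
  have nwx := hwx.ne; have nwy := hwy.ne; have nwz := hwz.ne
  have nxw := nwx.symm; have nyw := nwy.symm; have nzw := nwz.symm
  have nyx := nxy.symm; have nzx := nxz.symm; have nzy := nyz.symm
  refine ⟨⟨⟨![w,x,y,z], ?_⟩, ?_⟩⟩
  · intro i j hij
    fin_cases i <;> fin_cases j <;> simp_all
  · intro i j
    change G.Adj (![w,x,y,z] i) (![w,x,y,z] j) ↔ _
    fin_cases i <;> fin_cases j <;>
      simp_all [graphK13]

lemma dist2 {V : Type} (G : SimpleGraph V) (h4 : P4Free G) {a b : V}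
    (hr : G.Reachable a b) (hne : a ≠ b) :
    G.Adj a b ∨ ∃ w, G.Adj a w ∧ G.Adj w b := by
  classical
  obtain ⟨p⟩ := hr
  induction p with
  | nil => exact absurd rfl hne
  | @cons a c b hac p ih =>
    by_cases hcb : c = b
    · exact Or.inl (hcb ▸ hac)
    by_cases hadjcb : G.Adj c b
    · by_cases hab : G.Adj a b
      · exact Or.inl hab
      · exact Or.inr ⟨c, hac, hadjcb⟩
    · rcases ih hcb with h | ⟨w, hcw, hwb⟩
      · exact absurd h hadjcb
      · by_cases hab : G.Adj a b
        · exact Or.inl hab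
        by_cases haw : G.Adj a w
        · exact Or.inr ⟨w, haw, hwb⟩
        · exact absurd (embP4' G a c w b hac hcw hwb haw hab hadjcb) (not_nonempty_iff.mpr h4)

/-- main -/
theorem stmt8 {V : Type} [Fintype V] [Nonempty V] (G : SimpleGraph V) (hc : G.Connected)
    (h4 : P4Free G) (h13 : IsEmpty (graphK13 ↪g G)) (hB : IsEmpty (graphB ↪g G)) :
    ∃ (ι : Type) (parts : V → ι),
      (∀ x y, G.Adj x y ↔ parts x ≠ parts y) ∧
      ∀ i, ({x | parts x = i} : Set V).ncard ≤ 2 := by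
  classical
  have hnB := not_nonempty_iff.mpr hB
  have hn4 := not_nonempty_iff.mpr h4
  have hn13 := not_nonempty_iff.mpr h13
  have htrans : ∀ {x y z : V}, ¬G.Adj x y → ¬G.Adj y z → ¬G.Adj x z := by
    intro x y z hxy hyz hxz
    rcases eq_or_ne x y with rfl | nxy
    · exact hyz hxz
    rcases eq_or_ne y z with rfl | nyz
    · exact hxy hxz
    have hyx : y ≠ x := fun h => nxy h.symm
    rcases dist2 G h4 (hc.preconnected y x) hyx with h | ⟨w, hyw, hwx⟩
    · exact hxy h.symm
    by_cases hwz : G.Adj w z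
    · exact hnB (embB' G w y x z hyw.symm hwx hwz hxz
        (fun h => hxy h.symm) hyz hyx nyz)
    · exact hn4 (embP4' G y w x z hyw hwx hxz
        (fun h => hxy h.symm) hyz hwz)
  let s : Setoid V := ⟨fun x y => ¬G.Adj x y,
    ⟨fun _ => G.irrefl, fun h h' => h h'.symm, fun h h' => htrans h h'⟩⟩
  refine ⟨Quotient s, Quotient.mk s, ?_, ?_⟩
  · intro x y
    constructor
    · intro h heq
      exact Quotient.exact heq h
    · intro h
      by_contra hna
      exact h (Quotient.sound hna)
  · intro i
    by_contra hgt
    rw [not_le] at hgt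
    obtain ⟨a, ha, b, hb, c, hcc, nab, nac, nbc⟩ :=
      (Set.two_lt_ncard (Set.toFinite _)).mp hgt
    simp only [Set.mem_setOf_eq] at ha hb hcc
    have hab : ¬G.Adj a b := Quotient.exact (ha.trans hb.symm)
    have hac : ¬G.Adj a c := Quotient.exact (ha.trans hcc.symm)
    have hbc : ¬G.Adj b c := Quotient.exact (hb.trans hcc.symm)
    by_cases hw : ∃ w : V, Quotient.mk s w ≠ i
    · obtain ⟨w, hwi⟩ := hw
      have hwa : G.Adj w a := by
        by_contra h; exact hwi ((Quotient.sound h).trans ha)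
      have hwb : G.Adj w b := by
        by_contra h; exact hwi ((Quotient.sound h).trans hb)
      have hwc : G.Adj w c := by
        by_contra h; exact hwi ((Quotient.sound h).trans hcc)
      exact hn13 (embK13' G w a b c hwa hwb hwc hab hac hbc nab nac nbc)
    · push_neg at hw
      have hnoadj : ∀ x y : V, ¬G.Adj x y := by
        intro x y hxy
        exact Quotient.exact ((hw x).trans (hw y).symm) hxy
      rcases dist2 G h4 (hc.preconnected a b) nab with h | ⟨w, h, _⟩ <;>
        exact hnoadj _ _ h
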